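/- For every z ∈ ℂ with essinf_ω |z − ζ(ω)| > 0, the adjoint of the transfer function satisfies M(z)* = M⁻(conj z), where M⁻ is the transfer function built from the conjugate contour datum. -/

import Mathlib

open MeasureTheory ContinuousLinearMap

/-- The analytically continued transfer function
`M(z) = Ã - z + ∫ z/(z-ζ(ω)) K(ω) dμ(ω)`. -/
noncomputable def Mtr {H : Type*} [NormedAddCommGroup H] [NormedSpace ℂ H] [CompleteSpace H]
    {Ω : Type*} [MeasurableSpace Ω] (μ : Measure Ω)
    (ζ : Ω → ℂ) (K : Ω → H →L[ℂ] H) (A : H →L[ℂ] H) (z : ℂ) : H →L[ℂ] H :=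
  A - z • (1 : H →L[ℂ] H) + ∫ ω, (z / (z - ζ ω)) • K ω ∂μ

/-- Formula (4.12): `M(z)* = M⁻(z̄)`, where `M⁻` is the transfer function of the
conjugate contour datum `(Ω, μ, conj ∘ ζ, adjoint ∘ K)`. -/
theorem adjoint_transfer_function
    {H : Type*} [NormedAddCommGroup H] [InnerProductSpace ℂ H] [CompleteSpace H]
    {Ω : Type*} [MeasurableSpace Ω] (μ : Measure Ω)
    (ζ : Ω → ℂ) (hζ : Measurable ζ)
    (K : Ω → H →L[ℂ] H) (hK : Integrable K μ)
    (A : H →L[ℂ] H) (hA : IsSelfAdjoint A)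
    (z : ℂ) (hz : ∃ ε > (0 : ℝ), ∀ᵐ ω ∂μ, ε ≤ ‖z - ζ ω‖) :
    ContinuousLinearMap.adjoint (Mtr μ ζ K A z) =
      Mtr μ (fun ω => (starRingEnd ℂ) (ζ ω))
        (fun ω => ContinuousLinearMap.adjoint (K ω)) A ((starRingEnd ℂ) z) := by
  obtain ⟨ε, hε, hbd⟩ := hz
  have hmeas : AEStronglyMeasurable (fun ω => z / (z - ζ ω)) μ :=
    (measurable_const.div (measurable_const.sub hζ)).aestronglyMeasurable
  have hφ : MemLp (fun ω => z / (z - ζ ω)) ⊤ μ := by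
    refine memLp_top_of_bound hmeas (‖z‖ / ε) ?_
    filter_upwards [hbd] with ω hω
    rw [norm_div]
    gcongr
  have hInt : Integrable (fun ω => (z / (z - ζ ω)) • K ω) μ :=
    hK.smul_of_top_right hφ
  have hstar : (∫ ω, star ((z / (z - ζ ω)) • K ω) ∂μ)
      = star (∫ ω, (z / (z - ζ ω)) • K ω ∂μ) :=
    ((starL' ℝ : (H →L[ℂ] H) ≃L[ℝ] (H →L[ℂ] H)).toContinuousLinearMap).integral_comp_comm hInt
  simp only [Mtr, ← star_eq_adjoint]
  rw [star_add, star_sub, star_smul, star_one, hA.star_eq, ← hstar]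
  congr 1
  refine integral_congr_ae (Filter.Eventually.of_forall fun ω => ?_)
  simp [star_smul, map_div₀, RCLike.star_def]
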